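/- For fixed d ≥ 2 and fixed reals y_1 > ... > y_d with y_1 + ... + y_d = 0, as n → ∞, C_{d,dn} · dim(n + y_1√n, ..., n + y_d√n) → exp(-W(y_1,...,y_d)), where C_{d,dn} = (2π)^{d/2} · n^{dn + d(d+1)/4} / (Γ(dn+1)·e^{dn}) and W(y) = (1/2)∑ y_i² - ∑_{i<j} log(y_i - y_j). -/

import Mathlib

open Finset

def rect (d q : ℕ) : YoungDiagram where
  cells := Finset.range d ×ˢ Finset.range q
  isLowerSet := by
    rintro ⟨a, b⟩ ⟨c, e⟩ ⟨h1, h2⟩ h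
    simp only [Finset.coe_product, Set.mem_prod, Finset.mem_coe, Finset.mem_range] at *
    omega

def complY (d q : ℕ) (μ : YoungDiagram) : YoungDiagram where
  cells := (Finset.range d ×ˢ Finset.range q).filter
    (fun c => c.2 < q - μ.rowLen (d - 1 - c.1))
  isLowerSet := by
    rintro ⟨a, b⟩ ⟨c, e⟩ ⟨h1, h2⟩ h
    simp only [Finset.coe_filter, Set.mem_setOf_eq, Finset.mem_product, Finset.mem_range] at *
    have := μ.rowLen_anti (d - 1 - a) (d - 1 - c) (by omega)
    omega

noncomputable def dimSYT (μ : YoungDiagram) : ℕ :=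
  Nat.card {f : μ.cells → Fin μ.card //
    Function.Bijective f ∧
    ∀ a b : μ.cells, (a : ℕ × ℕ).1 ≤ (b : ℕ × ℕ).1 → (a : ℕ × ℕ).2 ≤ (b : ℕ × ℕ).2 →
      a ≠ b → f a < f b}

def HasDecreasingSubseq {N : ℕ} (σ : Equiv.Perm (Fin N)) (k : ℕ) : Prop :=
  ∃ s : Fin k → Fin N, StrictMono s ∧ ∀ i j : Fin k, i < j → σ (s j) < σ (s i)

def HasIncreasingSubseq {N : ℕ} (σ : Equiv.Perm (Fin N)) (k : ℕ) : Prop :=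
  ∃ s : Fin k → Fin N, StrictMono s ∧ ∀ i j : Fin k, i < j → σ (s i) < σ (s j)

noncomputable def S (d N : ℕ) : ℕ :=
  Nat.card {σ : Equiv.Perm (Fin N) // ¬ HasDecreasingSubseq σ (d + 1)}

noncomputable def W (d : ℕ) (y : Fin d → ℝ) : ℝ :=
  (1/2) * ∑ i, y i ^ 2 -
    ∑ p ∈ Finset.univ.filter (fun p : Fin d × Fin d => p.1 < p.2), Real.log (y p.1 - y p.2)

noncomputable def dimR (d : ℕ) (l : Fin d → ℝ) : ℝ :=
  (Real.Gamma (∑ i, l i + 1) / ∏ i, Real.Gamma (l i - (i : ℕ) + d)) *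
    ∏ p ∈ Finset.univ.filter (fun p : Fin d × Fin d => p.1 < p.2),
      (l p.1 - l p.2 + (p.2 : ℕ) - (p.1 : ℕ))

noncomputable def mehta (d : ℕ) (β : ℝ) : ℝ :=
  ∫ x : Fin d → ℝ, Real.exp (-(β/2) * ∑ i, x i ^ 2) *
    ∏ p ∈ Finset.univ.filter (fun p : Fin d × Fin d => p.1 < p.2), |x p.1 - x p.2| ^ β

open Real Filter Finset Topology


-- log of factorial Stirling
lemma log_factorial_tendsto :
    Tendsto (fun n : ℕ => Real.log (n.factorial : ℝ) - (((n : ℝ) + 1/2) * Real.log n - n)) atTop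
      (𝓝 (Real.log (2 * π) / 2)) := by
  have h := Stirling.tendsto_stirlingSeq_sqrt_pi
  have h2 : Tendsto (fun n : ℕ => Real.log (Stirling.stirlingSeq n) + Real.log 2 / 2) atTop
      (𝓝 (Real.log (√π) + Real.log 2 / 2)) := by
    exact (h.log (by positivity)).add_const _
  have heq : ∀ᶠ n : ℕ in atTop, Real.log (Stirling.stirlingSeq n) + Real.log 2 / 2
      = Real.log (n.factorial : ℝ) - (((n : ℝ) + 1/2) * Real.log n - n) := by
    filter_upwards [eventually_ge_atTop 1] with n hn
    have hn0 : (0:ℝ) < n := by exact_mod_cast hn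
    have hfac : (0:ℝ) < (n.factorial : ℝ) := by exact_mod_cast n.factorial_pos
    rw [Stirling.stirlingSeq, Real.log_div hfac.ne' (by positivity), Real.log_mul (by positivity)
      (by positivity), Real.log_sqrt (by positivity), Real.log_pow, Real.log_div hn0.ne'
      (exp_pos 1).ne', Real.log_exp, Real.log_mul two_ne_zero hn0.ne']
    ring
  have : Real.log (√π) + Real.log 2 / 2 = Real.log (2 * π) / 2 := by
    rw [Real.log_sqrt pi_pos.le, Real.log_mul two_ne_zero pi_pos.ne']
    ring
  rw [this] at h2
  exact h2.congr' heq


lemma gamma_nat_tendsto :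
    Tendsto (fun m : ℕ => Real.log (Real.Gamma m) - (((m : ℝ) - 1/2) * Real.log m - m)) atTop
      (𝓝 (Real.log (2 * π) / 2)) := by
  have hc : Tendsto (fun m : ℕ => (((m:ℝ) - 1/2) * Real.log (1 + 1/((m:ℝ)-1)))) atTop (𝓝 1) := by
    have h1 : Tendsto (fun m : ℕ => ((m:ℝ)-1) * Real.log (1 + 1/((m:ℝ)-1))) atTop (𝓝 1) := by
      have := (Real.tendsto_mul_log_one_add_div_atTop 1).comp
        (tendsto_atTop_add_const_right atTop (-1 : ℝ) tendsto_natCast_atTop_atTop)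
      simpa [Function.comp_def, sub_eq_add_neg] using this
    have h2 : Tendsto (fun m : ℕ => (1/2 : ℝ) * Real.log (1 + 1/((m:ℝ)-1))) atTop (𝓝 0) := by
      have hz : Tendsto (fun m : ℕ => 1/((m:ℝ)-1)) atTop (𝓝 0) :=
        tendsto_one_div_atTop_nhds_zero_nat.comp (tendsto_sub_atTop_nat 1) |>.congr' (by
          filter_upwards [eventually_ge_atTop 1] with m hm
          simp [Nat.cast_sub hm])
      have hone := hz.const_add (1:ℝ)
      rw [add_zero] at hone
      have hl := (Real.continuousAt_log (by norm_num : (1:ℝ) ≠ 0)).tendsto.comp hone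
      simpa [Function.comp] using hl.const_mul (1/2 : ℝ)
    have := h1.add h2
    rw [add_zero] at this
    refine this.congr fun m => by ring
  have hprev : Tendsto (fun m : ℕ =>
      Real.log ((m-1).factorial : ℝ) - (((m:ℝ) - 1/2) * Real.log ((m:ℝ)-1) - ((m:ℝ)-1)))
      atTop (𝓝 (Real.log (2 * π) / 2)) := by
    have := log_factorial_tendsto.comp (tendsto_sub_atTop_nat 1)
    refine this.congr' ?_
    filter_upwards [eventually_ge_atTop 1] with m hm
    have : ((m - 1 : ℕ) : ℝ) = (m:ℝ) - 1 := by
      push_cast [Nat.cast_sub hm]; ring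
    simp only [Function.comp, this]
    ring_nf
  have key := hprev.sub (hc.sub_const 1)
  have : (Real.log (2 * π) / 2) - (1 - 1) = Real.log (2 * π) / 2 := by ring
  rw [this] at key
  refine key.congr' ?_
  filter_upwards [eventually_ge_atTop 2] with m hm
  have hm1 : (1:ℝ) < (m:ℝ) := by exact_mod_cast hm.trans_lt' one_lt_two
  have hΓ : Real.Gamma m = ((m-1).factorial : ℝ) := by
    rw [← Real.Gamma_nat_eq_factorial (m-1)]
    congr 1
    have : ((m-1:ℕ):ℝ) = (m:ℝ)-1 := by
      push_cast [Nat.cast_sub (by omega : 1 ≤ m)]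
      ring
    rw [this]
    ring
  have hlog : Real.log (1 + 1/((m:ℝ)-1)) = Real.log m - Real.log ((m:ℝ)-1) := by
    have hne : (m:ℝ)-1 ≠ 0 := by linarith
    have h1 : (1:ℝ) + 1/((m:ℝ)-1) = (m:ℝ)/((m:ℝ)-1) := by
      field_simp
      ring
    rw [h1, Real.log_div (by positivity) (by linarith)]
  rw [hΓ, hlog]
  ring


lemma log_nat_sub_tendsto :
    Tendsto (fun m : ℕ => Real.log m - Real.log ((m:ℝ)-1)) atTop (𝓝 0) := by
  have hz : Tendsto (fun m : ℕ => 1/((m:ℝ)-1)) atTop (𝓝 0) :=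
    tendsto_one_div_atTop_nhds_zero_nat.comp (tendsto_sub_atTop_nat 1) |>.congr' (by
      filter_upwards [eventually_ge_atTop 1] with m hm
      simp [Nat.cast_sub hm])
  have hone := hz.const_add (1:ℝ)
  rw [add_zero] at hone
  have hl := (Real.continuousAt_log (by norm_num : (1:ℝ) ≠ 0)).tendsto.comp hone
  rw [Real.log_one] at hl
  refine hl.congr' ?_
  filter_upwards [eventually_ge_atTop 2] with m hm
  have hm1 : (1:ℝ) < (m:ℝ) := by exact_mod_cast hm.trans_lt' one_lt_two
  have hne : (m:ℝ)-1 ≠ 0 := by linarith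
  have h1 : (1:ℝ) + 1/((m:ℝ)-1) = (m:ℝ)/((m:ℝ)-1) := by field_simp; ring
  simp only [Function.comp]
  rw [h1, Real.log_div (by positivity) hne]

set_option maxHeartbeats 1000000 in
lemma stirling_real :
    Tendsto (fun x : ℝ => Real.log (Real.Gamma x) - ((x - 1/2) * Real.log x - x)) atTop
      (𝓝 (Real.log (2 * π) / 2)) := by
  set A : ℕ → ℝ := fun m => Real.log (Real.Gamma m) - (((m : ℝ) - 1/2) * Real.log m - m) with hA
  set E : ℝ → ℝ := fun x =>
    Real.log (Real.Gamma x) - Real.log (Real.Gamma (⌊x⌋₊ : ℝ))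
      - (x - (⌊x⌋₊:ℝ)) * Real.log (⌊x⌋₊ : ℝ) with hE
  set T : ℝ → ℝ := fun x =>
    (x - (⌊x⌋₊:ℝ)) - (x - 1/2) * (Real.log x - Real.log (⌊x⌋₊:ℝ)) with hT
  have hfloor : Tendsto (fun x : ℝ => ⌊x⌋₊) atTop atTop := tendsto_nat_floor_atTop
  have hfloorR : Tendsto (fun x : ℝ => (⌊x⌋₊ : ℝ)) atTop atTop :=
    tendsto_natCast_atTop_atTop.comp hfloor
  -- bounds for E
  have hcvx := Real.convexOn_log_Gamma
  have hEbound : ∀ᶠ x : ℝ in atTop,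
      -(Real.log (⌊x⌋₊:ℝ) - Real.log ((⌊x⌋₊:ℝ)-1)) ≤ E x ∧ E x ≤ 0 := by
    filter_upwards [eventually_ge_atTop 2] with x hx
    set m : ℕ := ⌊x⌋₊ with hm
    have hm2 : 2 ≤ m := Nat.le_floor (by exact_mod_cast hx)
    have hM2 : (2:ℝ) ≤ (m:ℝ) := by exact_mod_cast hm2
    set M : ℝ := (m:ℝ)
    have hMx : M ≤ x := Nat.floor_le (by linarith)
    have hxM1 : x < M + 1 := by
      have := Nat.lt_floor_add_one x
      push_cast at this ⊢
      exact this
    set t : ℝ := x - M with ht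
    have ht0 : 0 ≤ t := by simp [ht]; linarith
    have ht1 : t < 1 := by simp [ht]; linarith
    have hM0 : (0:ℝ) < M := by linarith
    have hM1 : (0:ℝ) < M - 1 := by linarith
    have hΓM : 0 < Real.Gamma M := Real.Gamma_pos_of_pos hM0
    have hΓM1 : 0 < Real.Gamma (M-1) := Real.Gamma_pos_of_pos hM1
    have hfM1 : Real.log (Real.Gamma (M+1)) = Real.log (Real.Gamma M) + Real.log M := by
      rw [Real.Gamma_add_one hM0.ne', Real.log_mul hM0.ne' hΓM.ne']
      ring
    have hfM : Real.log (Real.Gamma M) = Real.log (Real.Gamma (M-1)) + Real.log (M-1) := by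
      have : M = (M - 1) + 1 := by ring
      rw [this, Real.Gamma_add_one hM1.ne', Real.log_mul hM1.ne' hΓM1.ne']
      ring
    constructor
    · -- lower bound
      rcases eq_or_lt_of_le hMx with heq | hlt
      · have hxm : (⌊x⌋₊:ℝ) = x := heq
        have hEx : E x = 0 := by
          simp [hE, hxm]
        rw [hEx]
        have : Real.log (M-1) ≤ Real.log M :=
          Real.log_le_log (by linarith) (by linarith)
        linarith
      · have hslope := hcvx.slope_mono_adjacent (Set.mem_Ioi.mpr hM1) (Set.mem_Ioi.mpr (by linarith : (0:ℝ) < x)) (by linarith : M - 1 < M) hlt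
        simp only [Function.comp] at hslope
        rw [show M - (M-1) = 1 by ring, div_one] at hslope
        have hlhs : Real.log (Real.Gamma M) - Real.log (Real.Gamma (M-1)) = Real.log (M-1) := by
          rw [hfM]; ring
        rw [hlhs] at hslope
        have h2 : Real.log (M-1) ≤ (Real.log (Real.Gamma x) - Real.log (Real.Gamma M)) / (x - M) :=
          hslope
        have h3 : t * Real.log (M-1) ≤ Real.log (Real.Gamma x) - Real.log (Real.Gamma M) := by
          have htpos : 0 < t := by simp [ht]; linarith
          calc t * Real.log (M-1) ≤ t * ((Real.log (Real.Gamma x) - Real.log (Real.Gamma M)) / t) := by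
                apply mul_le_mul_of_nonneg_left _ ht0
                simpa [ht] using h2
            _ = Real.log (Real.Gamma x) - Real.log (Real.Gamma M) := by
                field_simp
        have hlogle : Real.log (M-1) ≤ Real.log M :=
          Real.log_le_log (by linarith) (by linarith)
        have hlog0 : 0 ≤ Real.log (M - 1) := Real.log_nonneg (by linarith)
        simp only [hE, ← hm]
        have : t * Real.log M - t * Real.log (M-1) ≤ Real.log M - Real.log (M-1) := by
          nlinarith
        nlinarith
    · -- upper bound : convexity combination
      have hcomb := hcvx.2 (Set.mem_Ioi.mpr hM0) (Set.mem_Ioi.mpr (by linarith : (0:ℝ) < M + 1))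
        (by linarith : (0:ℝ) ≤ 1 - t) ht0 (by ring)
      simp only [Function.comp, smul_eq_mul] at hcomb
      rw [show (1-t) * M + t * (M+1) = x by rw [ht]; ring] at hcomb
      rw [hfM1] at hcomb
      simp only [hE, ← hm, ← ht]
      nlinarith
  have hElim : Tendsto E atTop (𝓝 0) := by
    have hub : Tendsto (fun x : ℝ => Real.log (⌊x⌋₊:ℝ) - Real.log ((⌊x⌋₊:ℝ)-1)) atTop (𝓝 0) :=
      log_nat_sub_tendsto.comp hfloor
    have hlb : Tendsto (fun x : ℝ => -(Real.log (⌊x⌋₊:ℝ) - Real.log ((⌊x⌋₊:ℝ)-1))) atTop (𝓝 0) := by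
      simpa using hub.neg
    exact tendsto_of_tendsto_of_tendsto_of_le_of_le' hlb tendsto_const_nhds
      (hEbound.mono fun x h => h.1) (hEbound.mono fun x h => h.2)
  have hTbound : ∀ᶠ x : ℝ in atTop, -(1/(⌊x⌋₊:ℝ)) ≤ T x ∧ T x ≤ 1/x := by
    filter_upwards [eventually_ge_atTop 2] with x hx
    set m : ℕ := ⌊x⌋₊ with hm
    have hm2 : 2 ≤ m := Nat.le_floor (by exact_mod_cast hx)
    have hM2 : (2:ℝ) ≤ (m:ℝ) := by exact_mod_cast hm2
    set M : ℝ := (m:ℝ)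
    have hMx : M ≤ x := Nat.floor_le (by linarith)
    have hxM1 : x < M + 1 := by
      have := Nat.lt_floor_add_one x
      push_cast at this ⊢
      exact this
    set t : ℝ := x - M with ht
    have ht0 : 0 ≤ t := by simp [ht]; linarith
    have ht1 : t < 1 := by simp [ht]; linarith
    have hM0 : (0:ℝ) < M := by linarith
    have hx0 : (0:ℝ) < x := by linarith
    have hlogdiv : Real.log x - Real.log M = Real.log (x / M) :=
      (Real.log_div hx0.ne' hM0.ne').symm
    have hub1 : Real.log (x/M) ≤ t/M := by
      have := Real.log_le_sub_one_of_pos (show (0:ℝ) < x/M by positivity)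
      have hxm : x/M - 1 = t/M := by field_simp [ht]; linarith
      linarith [hxm ▸ this]
    have hlb1 : 1 - M/x ≤ Real.log (x/M) := by
      have := Real.log_le_sub_one_of_pos (show (0:ℝ) < M/x by positivity)
      have : -Real.log (x/M) ≤ M/x - 1 := by
        rw [← Real.log_inv]
        have hinv : (x/M)⁻¹ = M/x := by field_simp
        rw [hinv]
        exact this
      linarith
    have hx12 : (0:ℝ) ≤ x - 1/2 := by linarith
    constructor
    · -- T ≥ -(1/M)
      have h1 : (x - 1/2) * (Real.log x - Real.log M) ≤ (x - 1/2) * (t/M) := by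
        rw [hlogdiv]
        exact mul_le_mul_of_nonneg_left hub1 hx12
      have h2 : (x - 1/2) * (t/M) = t + t*(t - 1/2)/M := by
        field_simp [ht]
        ring
      have h3 : t*(t-1/2) ≤ 1 := by nlinarith
      have h5 : t*(t-1/2)/M ≤ 1/M := by gcongr
      simp only [hT, ← hm, ← ht]
      linarith
    · -- T ≤ 1/x
      have h1 : (x - 1/2) * (t/x) ≤ (x - 1/2) * (Real.log x - Real.log M) := by
        rw [hlogdiv]
        apply mul_le_mul_of_nonneg_left _ hx12
        have : 1 - M/x = t/x := by
          field_simp [ht]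
          linarith
        linarith [hlb1, this]
      have h2 : (x - 1/2) * (t/x) = t - t/(2*x) := by
        field_simp [ht]
      have h3 : t/(2*x) ≤ 1/x := by
        rw [div_le_div_iff₀ (by linarith) hx0]
        nlinarith
      simp only [hT, ← hm, ← ht]
      linarith
  have hTlim : Tendsto T atTop (𝓝 0) := by
    have hub : Tendsto (fun x : ℝ => 1/x) atTop (𝓝 0) := by
      simpa only [one_div] using tendsto_inv_atTop_zero
    have hlb : Tendsto (fun x : ℝ => -(1/(⌊x⌋₊:ℝ))) atTop (𝓝 0) := by
      have : Tendsto (fun x : ℝ => 1/(⌊x⌋₊:ℝ)) atTop (𝓝 0) := by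
        simpa only [one_div, Function.comp_def] using tendsto_inv_atTop_zero.comp hfloorR
      simpa using this.neg
    exact tendsto_of_tendsto_of_tendsto_of_le_of_le' hlb hub
      (hTbound.mono fun x h => h.1) (hTbound.mono fun x h => h.2)
  have hcomb := ((gamma_nat_tendsto.comp hfloor).add (hElim.add hTlim))
  rw [show Real.log (2*π)/2 + (0 + 0) = Real.log (2*π)/2 by ring] at hcomb
  refine hcomb.congr fun x => ?_
  simp only [hA, hE, hT, Function.comp]
  ring


lemma sqrt_real_atTop : Tendsto Real.sqrt atTop atTop := by
  have h := tendsto_rpow_atTop (by norm_num : (0:ℝ) < 1/2)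
  refine h.congr' ?_
  filter_upwards [eventually_ge_atTop (0:ℝ)] with x hx
  exact (Real.sqrt_eq_rpow x).symm

lemma sqrt_nat_atTop : Tendsto (fun n : ℕ => Real.sqrt n) atTop atTop :=
  sqrt_real_atTop.comp tendsto_natCast_atTop_atTop

lemma key_lim (y c : ℝ) :
    Tendsto (fun n : ℕ => ((n:ℝ) + y * Real.sqrt n + c - 1/2) *
      (Real.log ((n:ℝ) + y * Real.sqrt n + c) - Real.log n) - (y * Real.sqrt n + c)) atTop
      (𝓝 (y^2/2)) := by
  set v : ℕ → ℝ := fun n => (y * Real.sqrt n + c)/n with hv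
  have hinvsqrt : Tendsto (fun n : ℕ => (Real.sqrt n)⁻¹) atTop (𝓝 0) :=
    tendsto_inv_atTop_zero.comp sqrt_nat_atTop
  have hinvn : Tendsto (fun n : ℕ => ((n:ℝ))⁻¹) atTop (𝓝 0) :=
    tendsto_inv_atTop_zero.comp tendsto_natCast_atTop_atTop
  have hvlim : Tendsto v atTop (𝓝 0) := by
    have h := ((hinvsqrt.const_mul y).add (hinvn.const_mul c))
    rw [mul_zero, mul_zero, add_zero] at h
    refine h.congr' ?_
    filter_upwards [eventually_ge_atTop 1] with n hn
    have hn0 : (0:ℝ) < n := by exact_mod_cast hn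
    have hs0 : (0:ℝ) < Real.sqrt n := Real.sqrt_pos.mpr hn0
    have hss : Real.sqrt n * Real.sqrt n = (n:ℝ) := Real.mul_self_sqrt hn0.le
    simp only [hv]
    field_simp
    linear_combination (-y) * hss
  -- n * v^2 → y^2
  have hnv2 : Tendsto (fun n : ℕ => (n:ℝ) * v n ^ 2) atTop (𝓝 (y^2)) := by
    have h := ((hinvsqrt.const_mul (2*y*c)).add (hinvn.const_mul (c^2))).const_add (y^2)
    rw [mul_zero, mul_zero, add_zero, add_zero] at h
    refine h.congr' ?_
    filter_upwards [eventually_ge_atTop 1] with n hn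
    have hn0 : (0:ℝ) < n := by exact_mod_cast hn
    have hs0 : (0:ℝ) < Real.sqrt n := Real.sqrt_pos.mpr hn0
    have hss : Real.sqrt n * Real.sqrt n = (n:ℝ) := Real.mul_self_sqrt hn0.le
    simp only [hv]
    field_simp
    linear_combination (-(y^2*Real.sqrt n + 2*y*c)) * hss
  -- n * |v|^3 → 0
  have hsmall : Tendsto (fun n : ℕ => (n:ℝ) * |v n| ^ 3) atTop (𝓝 0) := by
    have hub : Tendsto (fun n : ℕ => (|y|+|c|)^3 * (Real.sqrt n)⁻¹) atTop (𝓝 0) := by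
      simpa using hinvsqrt.const_mul ((|y|+|c|)^3)
    refine squeeze_zero' ?_ ?_ hub
    · filter_upwards with n; positivity
    · filter_upwards [eventually_ge_atTop 1] with n hn
      have hn0 : (0:ℝ) < n := by exact_mod_cast hn
      have hs0 : (0:ℝ) < Real.sqrt n := Real.sqrt_pos.mpr hn0
      have hs1 : (1:ℝ) ≤ Real.sqrt n := Real.one_le_sqrt.mpr (by exact_mod_cast hn)
      have hss : Real.sqrt n * Real.sqrt n = (n:ℝ) := Real.mul_self_sqrt hn0.le
      have hvb : |v n| ≤ (|y|+|c|) * (Real.sqrt n)⁻¹ := by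
        simp only [hv]
        rw [abs_div, abs_of_pos hn0, div_le_iff₀ hn0]
        calc |y * Real.sqrt n + c| ≤ |y| * Real.sqrt n + |c| := by
              refine (abs_add_le _ _).trans ?_
              simp [abs_mul, abs_of_pos hs0]
          _ ≤ (|y|+|c|) * Real.sqrt n := by nlinarith [abs_nonneg c, abs_nonneg y]
          _ = (|y|+|c|) * (Real.sqrt n)⁻¹ * n := by
              field_simp
              linear_combination (|y|+|c|) * hss
      calc (n:ℝ) * |v n|^3 ≤ (n:ℝ) * ((|y|+|c|) * (Real.sqrt n)⁻¹)^3 := by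
            apply mul_le_mul_of_nonneg_left _ hn0.le
            exact pow_le_pow_left₀ (abs_nonneg _) hvb 3
        _ = (|y|+|c|)^3 * ((n:ℝ) * ((Real.sqrt n)⁻¹)^3) := by ring
        _ = (|y|+|c|)^3 * (Real.sqrt n)⁻¹ := by
            congr 1
            have h3 : (Real.sqrt n)^3 = (n:ℝ) * Real.sqrt n := by
              rw [pow_succ, sq, hss]
            rw [inv_pow, h3]
            field_simp
  have hvhalf : ∀ᶠ n : ℕ in atTop, |v n| ≤ 1/2 :=
    hvlim.abs.eventually_le_const (by norm_num)
  -- two remainder terms → 0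
  have hrem1 : Tendsto (fun n : ℕ => (n:ℝ) * (Real.log (1 + v n) - v n + v n^2/2)) atTop (𝓝 0) := by
    refine squeeze_zero_norm' ?_ (by simpa using hsmall.const_mul 2)
    filter_upwards [hvhalf, eventually_ge_atTop 1] with n hn2 hn1
    have h := Real.abs_log_sub_add_sum_range_le (x := -(v n)) (by rw [abs_neg]; linarith [hn2]) 2
    have habs : |Real.log (1 + v n) - v n + v n^2/2| ≤ |v n|^3 / (1 - |v n|) := by
      have : (∑ i ∈ range 2, (-(v n)) ^ (i + 1) / (i + 1)) = -(v n) + v n^2/2 := by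
        simp [Finset.sum_range_succ]
        ring
      rw [this] at h
      rw [show (1 : ℝ) - -(v n) = 1 + v n by ring] at h
      rw [abs_neg] at h
      calc |Real.log (1 + v n) - v n + v n^2/2| = |(-(v n) + v n^2/2) + Real.log (1 + v n)| := by
            congr 1; ring
        _ ≤ |v n|^(2+1) / (1 - |v n|) := h
    have hn0 : (0:ℝ) ≤ n := Nat.cast_nonneg n
    rw [Real.norm_eq_abs, abs_mul, abs_of_nonneg hn0]
    calc (n:ℝ) * |Real.log (1 + v n) - v n + v n^2/2| ≤ (n:ℝ) * (|v n|^3 / (1 - |v n|)) := by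
          exact mul_le_mul_of_nonneg_left habs hn0
      _ ≤ 2 * ((n:ℝ) * |v n|^3) := by
          have h1 : (0:ℝ) < 1 - |v n| → |v n|^3/(1-|v n|) ≤ 2 * |v n|^3 := by
            intro hpos
            rw [div_le_iff₀ hpos]
            nlinarith [abs_nonneg (v n), pow_nonneg (abs_nonneg (v n)) 3]
          have := h1 (by linarith)
          nlinarith [this, hn0, pow_nonneg (abs_nonneg (v n)) 3]
  have hrem2 : Tendsto (fun n : ℕ => ((n:ℝ) * v n) * (Real.log (1 + v n) - v n)) atTop (𝓝 0) := by
    refine squeeze_zero_norm' ?_ (by simpa using hsmall.const_mul 2)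
    filter_upwards [hvhalf, eventually_ge_atTop 1] with n hn2 hn1
    have h := Real.abs_log_sub_add_sum_range_le (x := -(v n)) (by rw [abs_neg]; linarith [hn2]) 1
    have habs : |Real.log (1 + v n) - v n| ≤ |v n|^2 / (1 - |v n|) := by
      have : (∑ i ∈ range 1, (-(v n)) ^ (i + 1) / (i + 1)) = -(v n) := by
        simp
      rw [this, show (1 : ℝ) - -(v n) = 1 + v n by ring, abs_neg] at h
      calc |Real.log (1 + v n) - v n| = |(-(v n)) + Real.log (1 + v n)| := by
            congr 1; ring
        _ ≤ |v n|^(1+1) / (1 - |v n|) := h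
    have hn0 : (0:ℝ) ≤ n := Nat.cast_nonneg n
    rw [Real.norm_eq_abs, abs_mul, abs_mul, abs_of_nonneg hn0]
    calc (n:ℝ) * |v n| * |Real.log (1 + v n) - v n| ≤ (n:ℝ) * |v n| * (|v n|^2/(1 - |v n|)) := by
          apply mul_le_mul_of_nonneg_left habs (by positivity)
      _ ≤ ((n:ℝ) * |v n|) * (2 * |v n|^2) := by
          have hpos : (0:ℝ) < 1 - |v n| := by linarith
          have h1 : |v n|^2/(1-|v n|) ≤ 2 * |v n|^2 := by
            rw [div_le_iff₀ hpos]
            nlinarith [abs_nonneg (v n), pow_nonneg (abs_nonneg (v n)) 2]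
          exact mul_le_mul_of_nonneg_left h1 (by positivity)
      _ = 2 * ((n:ℝ) * |v n|^3) := by ring
  have hloglim : Tendsto (fun n : ℕ => Real.log (1 + v n)) atTop (𝓝 0) := by
    have h1 := hvlim.const_add (1:ℝ)
    rw [add_zero] at h1
    have := (Real.continuousAt_log (by norm_num : (1:ℝ) ≠ 0)).tendsto.comp h1
    simpa [Function.comp_def] using this
  -- combine
  have hmain := ((hnv2.div_const 2).sub (hloglim.const_mul (1/2))).add (hrem1.add hrem2)
  rw [show (y^2/2 - 1/2 * 0) + (0 + 0) = y^2/2 by ring] at hmain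
  refine hmain.congr' ?_
  filter_upwards [hvhalf, eventually_ge_atTop 1] with n hn2 hn1
  have hn0 : (0:ℝ) < n := by exact_mod_cast hn1
  have huv : (n:ℝ) + y * Real.sqrt n + c = n * (1 + v n) := by
    simp only [hv]
    field_simp
    ring
  have h1v : (0:ℝ) < 1 + v n := by
    rcases abs_le.mp hn2 with ⟨h, _⟩
    linarith
  have hlogu : Real.log ((n:ℝ) + y * Real.sqrt n + c) - Real.log n = Real.log (1 + v n) := by
    rw [huv, Real.log_mul hn0.ne' h1v.ne']
    ring
  have hyc : y * Real.sqrt n + c = (n:ℝ) * v n := by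
    simp only [hv]
    field_simp
  rw [hlogu, hyc, show (n:ℝ) + y * Real.sqrt n + c - 1/2 = n + n * v n - 1/2 by rw [huv]; ring]
  ring


lemma sum_range_real (d : ℕ) : ∑ i ∈ Finset.range d, (i:ℝ) = d * (d-1)/2 := by
  induction d with
  | zero => simp
  | succ k ih =>
      rw [Finset.sum_range_succ, ih]
      push_cast
      ring

lemma card_pairs (d : ℕ) :
    ((univ.filter fun p : Fin d × Fin d => p.1 < p.2).card : ℝ) = d * (d-1) / 2 := by
  have h : (univ.filter fun p : Fin d × Fin d => p.1 < p.2).card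
      = ∑ j : Fin d, (univ.filter fun i : Fin d => i < j).card := by
    rw [Finset.card_eq_sum_card_fiberwise (f := Prod.snd) (t := univ) (fun x _ => mem_univ _)]
    refine Finset.sum_congr rfl fun j _ => ?_
    apply Finset.card_bij (fun p _ => p.1)
    · rintro ⟨a, b⟩ hp
      simp only [mem_filter, mem_univ, true_and] at hp ⊢
      rcases hp with ⟨h1, h2⟩
      subst h2
      exact h1
    · rintro ⟨a, b⟩ hp ⟨a', b'⟩ hp' he
      simp only [mem_filter, mem_univ, true_and] at hp hp'
      simp only at he
      ext
      · exact congrArg Fin.val he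
      · simp [hp.2, hp'.2]
    · intro i hi
      simp only [mem_filter, mem_univ, true_and] at hi
      exact ⟨(i, j), by simp [hi], rfl⟩
  have h2 : ∀ j : Fin d, (univ.filter fun i : Fin d => i < j).card = (j : ℕ) := by
    intro j
    rw [show (univ.filter fun i : Fin d => i < j) = Finset.Iio j by ext i; simp]
    simp [Fin.card_Iio]
  rw [h, Finset.sum_congr rfl fun j _ => h2 j]
  rw [Nat.cast_sum]
  push_cast
  rw [Fin.sum_univ_eq_sum_range (fun i => (i:ℝ)) d]
  exact sum_range_real d


noncomputable def Rst (x : ℝ) : ℝ := Real.log (Real.Gamma x) - ((x - 1/2) * Real.log x - x)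

noncomputable def xv (d : ℕ) (y : Fin d → ℝ) (n : ℕ) (i : Fin d) : ℝ :=
  (n:ℝ) + y i * Real.sqrt n - (i:ℕ) + d

noncomputable def W' (d : ℕ) (y : Fin d → ℝ) : ℝ :=
  (1/2) * ∑ i, y i ^ 2 -
    ∑ p ∈ Finset.univ.filter (fun p : Fin d × Fin d => p.1 < p.2), Real.log (y p.1 - y p.2)

noncomputable def Phi (d : ℕ) (y : Fin d → ℝ) (n : ℕ) : ℝ :=
  (d:ℝ)/2 * Real.log (2*π) +
  (∑ p ∈ Finset.univ.filter (fun p : Fin d × Fin d => p.1 < p.2),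
    Real.log (y p.1 - y p.2 + (((p.2:ℕ):ℝ) - ((p.1:ℕ):ℝ))/Real.sqrt n))
  - ∑ i, Rst (xv d y n i)
  - ∑ i, ((xv d y n i - 1/2) * (Real.log (xv d y n i) - Real.log n)
      - (y i * Real.sqrt n + ((d:ℝ) - (i:ℕ))))

lemma xv_atTop (d : ℕ) (y : Fin d → ℝ) (i : Fin d) :
    Tendsto (fun n : ℕ => xv d y n i) atTop atTop := by
  have hhalf : Tendsto (fun n : ℕ => (n:ℝ)/2 - (i:ℕ) + d) atTop atTop := by
    apply tendsto_atTop_add_const_right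
    apply tendsto_atTop_add_const_right
    exact (tendsto_natCast_atTop_atTop).atTop_div_const (by norm_num)
  apply tendsto_atTop_mono' _ _ hhalf
  filter_upwards [eventually_ge_atTop (⌈(2*|y i|)^2⌉₊)] with n hn
  have h1 : (2*|y i|)^2 ≤ (n:ℝ) := le_trans (Nat.le_ceil _) (by exact_mod_cast hn)
  have hs : 2*|y i| ≤ Real.sqrt n := by
    rw [show (2*|y i|) = √((2*|y i|)^2) by rw [Real.sqrt_sq (by positivity)]]
    exact Real.sqrt_le_sqrt h1
  have hss : Real.sqrt n * Real.sqrt n = (n:ℝ) := Real.mul_self_sqrt (Nat.cast_nonneg n)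
  have habs : |y i| * Real.sqrt n ≤ (n:ℝ)/2 := by nlinarith [Real.sqrt_nonneg (n:ℝ)]
  have : -(|y i| * Real.sqrt n) ≤ y i * Real.sqrt n := by
    have := neg_abs_le (y i)
    nlinarith [Real.sqrt_nonneg (n:ℝ)]
  simp only [xv]
  linarith

lemma phi_tendsto (d : ℕ) (y : Fin d → ℝ) (hy : ∀ i j : Fin d, i < j → y j < y i) :
    Tendsto (Phi d y) atTop (𝓝 (- W d y)) := by
  have hinvsqrt : Tendsto (fun n : ℕ => (Real.sqrt n)⁻¹) atTop (𝓝 0) :=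
    tendsto_inv_atTop_zero.comp sqrt_nat_atTop
  -- pair sums
  have hpair : Tendsto (fun n : ℕ => ∑ p ∈ Finset.univ.filter (fun p : Fin d × Fin d => p.1 < p.2),
      Real.log (y p.1 - y p.2 + (((p.2:ℕ):ℝ) - ((p.1:ℕ):ℝ))/Real.sqrt n)) atTop
      (𝓝 (∑ p ∈ Finset.univ.filter (fun p : Fin d × Fin d => p.1 < p.2),
        Real.log (y p.1 - y p.2))) := by
    apply tendsto_finset_sum
    intro p hp
    have hplt : p.1 < p.2 := by simpa using hp
    have hpos : 0 < y p.1 - y p.2 := sub_pos.mpr (hy _ _ hplt)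
    have harg : Tendsto (fun n : ℕ => y p.1 - y p.2 + (((p.2:ℕ):ℝ) - ((p.1:ℕ):ℝ))/Real.sqrt n)
        atTop (𝓝 (y p.1 - y p.2)) := by
      have h := (hinvsqrt.const_mul (((p.2:ℕ):ℝ) - ((p.1:ℕ):ℝ))).const_add (y p.1 - y p.2)
      rw [mul_zero, add_zero] at h
      refine h.congr fun n => ?_
      rw [div_eq_mul_inv]
    have := (Real.continuousAt_log hpos.ne').tendsto.comp harg
    simpa [Function.comp_def] using this
  have hR : Tendsto (fun n : ℕ => ∑ i, Rst (xv d y n i)) atTop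
      (𝓝 (∑ _i : Fin d, Real.log (2*π)/2)) := by
    apply tendsto_finset_sum
    intro i _
    exact stirling_real.comp (xv_atTop d y i)
  have hD : Tendsto (fun n : ℕ => ∑ i, ((xv d y n i - 1/2) *
      (Real.log (xv d y n i) - Real.log n) - (y i * Real.sqrt n + ((d:ℝ) - (i:ℕ)))))
      atTop (𝓝 (∑ i, (y i)^2/2)) := by
    apply tendsto_finset_sum
    intro i _
    have h := key_lim (y i) ((d:ℝ) - (i:ℕ))
    refine h.congr fun n => ?_
    have hx : xv d y n i = (n:ℝ) + y i * Real.sqrt n + ((d:ℝ) - (i:ℕ)) := by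
      simp [xv]; ring
    rw [hx]
  have hmain := ((tendsto_const_nhds (x := (d:ℝ)/2 * Real.log (2*π))).add hpair).sub hR |>.sub hD
  have hval : (d:ℝ)/2 * Real.log (2*π) + (∑ p ∈ Finset.univ.filter
        (fun p : Fin d × Fin d => p.1 < p.2), Real.log (y p.1 - y p.2))
      - (∑ _i : Fin d, Real.log (2*π)/2) - (∑ i, (y i)^2/2) = - W d y := by
    rw [W, Finset.sum_const, card_univ, Fintype.card_fin, nsmul_eq_mul]
    rw [show (∑ i, (y i)^2/2) = (∑ i, (y i)^2)/2 from (Finset.sum_div _ _ _).symm]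
    ring
  rw [hval] at hmain
  exact hmain


lemma F_eq (d : ℕ) (y : Fin d → ℝ) (hy : ∀ i j : Fin d, i < j → y j < y i)
    (hsum : ∑ i, y i = 0) :
    ∀ᶠ n : ℕ in atTop,
      ((2 * π) ^ ((d : ℝ) / 2) * (n : ℝ) ^ ((d * n : ℕ) + (d : ℝ) * (d + 1) / 4 : ℝ) /
          (Real.Gamma (d * n + 1) * Real.exp (d * n))) *
        dimR d (fun i => (n : ℝ) + y i * Real.sqrt n) = Real.exp (Phi d y n) := by
  filter_upwards [eventually_ge_atTop 1,
    eventually_all.2 (fun i => (xv_atTop d y i).eventually_gt_atTop 0)] with n hn1 hxpos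
  have hn0 : (0:ℝ) < n := by exact_mod_cast hn1
  have hs0 : (0:ℝ) < Real.sqrt n := Real.sqrt_pos.mpr hn0
  have h2π : (0:ℝ) < 2*π := by positivity
  have hsl : (∑ i, ((n:ℝ) + y i * Real.sqrt n)) = (d:ℝ) * n := by
    rw [Finset.sum_add_distrib, Finset.sum_const, card_univ, Fintype.card_fin, nsmul_eq_mul,
      ← Finset.sum_mul, hsum, zero_mul, add_zero]
  have hΓdn : 0 < Real.Gamma ((d:ℝ)*(n:ℝ) + 1) := Real.Gamma_pos_of_pos (by positivity)
  have hΓx : ∀ i : Fin d, 0 < Real.Gamma (xv d y n i) :=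
    fun i => Real.Gamma_pos_of_pos (hxpos i)
  have hprodΓ : 0 < ∏ i, Real.Gamma (xv d y n i) := Finset.prod_pos fun i _ => hΓx i
  have hterm : ∀ p ∈ univ.filter (fun p : Fin d × Fin d => p.1 < p.2),
      ((n:ℝ) + y p.1 * Real.sqrt n) - ((n:ℝ) + y p.2 * Real.sqrt n) + ((p.2:ℕ):ℝ) - ((p.1:ℕ):ℝ)
        = Real.sqrt n * (y p.1 - y p.2 + (((p.2:ℕ):ℝ) - ((p.1:ℕ):ℝ))/Real.sqrt n) := by
    intro p _
    field_simp
    ring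
  have hfacpos : ∀ p ∈ univ.filter (fun p : Fin d × Fin d => p.1 < p.2),
      0 < y p.1 - y p.2 + (((p.2:ℕ):ℝ) - ((p.1:ℕ):ℝ))/Real.sqrt n := by
    intro p hp
    have hplt : p.1 < p.2 := by simpa using hp
    have h1 : 0 < y p.1 - y p.2 := sub_pos.mpr (hy _ _ hplt)
    have h2 : (0:ℝ) < ((p.2:ℕ):ℝ) - ((p.1:ℕ):ℝ) := by
      have : (p.1:ℕ) < (p.2:ℕ) := hplt
      have := sub_pos.mpr (show ((p.1:ℕ):ℝ) < ((p.2:ℕ):ℝ) by exact_mod_cast this)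
      exact this
    positivity
  have htermpos : ∀ p ∈ univ.filter (fun p : Fin d × Fin d => p.1 < p.2),
      0 < ((n:ℝ) + y p.1 * Real.sqrt n) - ((n:ℝ) + y p.2 * Real.sqrt n)
        + ((p.2:ℕ):ℝ) - ((p.1:ℕ):ℝ) := by
    intro p hp
    rw [hterm p hp]
    exact mul_pos hs0 (hfacpos p hp)
  have hPpos : 0 < ∏ p ∈ univ.filter (fun p : Fin d × Fin d => p.1 < p.2),
      (((n:ℝ) + y p.1 * Real.sqrt n) - ((n:ℝ) + y p.2 * Real.sqrt n)
        + ((p.2:ℕ):ℝ) - ((p.1:ℕ):ℝ)) := Finset.prod_pos htermpos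
  simp only [dimR]
  rw [show (∑ i, ((n:ℝ) + y i * Real.sqrt n)) + 1 = (d:ℝ)*(n:ℝ) + 1 by rw [hsl]]
  have hA : (0:ℝ) < (2 * π) ^ ((d : ℝ) / 2) := Real.rpow_pos_of_pos h2π _
  have hB : (0:ℝ) < (n : ℝ) ^ (((d * n : ℕ) : ℝ) + (d : ℝ) * ((d:ℝ) + 1) / 4 : ℝ) :=
    Real.rpow_pos_of_pos hn0 _
  have hE : (0:ℝ) < Real.exp ((d:ℝ)*(n:ℝ)) := Real.exp_pos _
  have hxvprod : (∏ i, Real.Gamma ((n:ℝ) + y i * Real.sqrt n - ((i:ℕ):ℝ) + (d:ℝ)))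
      = ∏ i, Real.Gamma (xv d y n i) := rfl
  rw [hxvprod]
  set A := (2 * π) ^ ((d : ℝ) / 2) with hAdef
  set B := (n : ℝ) ^ (((d * n : ℕ) : ℝ) + (d : ℝ) * ((d:ℝ) + 1) / 4) with hBdef
  set G := Real.Gamma ((d:ℝ)*(n:ℝ) + 1) with hGdef
  set E := Real.exp ((d:ℝ) * (n:ℝ)) with hEdef
  set C := ∏ i, Real.Gamma (xv d y n i) with hCdef
  set P := ∏ p ∈ univ.filter (fun p : Fin d × Fin d => p.1 < p.2),
      (((n:ℝ) + y p.1 * Real.sqrt n) - ((n:ℝ) + y p.2 * Real.sqrt n)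
        + ((p.2:ℕ):ℝ) - ((p.1:ℕ):ℝ)) with hPdef
  rw [show A * B / (G * E) * (G / C * P) = A * B * P / (E * C) by
    field_simp]
  rw [← Real.exp_log (show (0:ℝ) < A * B * P / (E * C) by positivity)]
  congr 1
  rw [Real.log_div (by positivity) (by positivity), Real.log_mul (by positivity) hPpos.ne',
    Real.log_mul hA.ne' hB.ne', Real.log_mul hE.ne' hprodΓ.ne', Real.log_exp, hAdef, hBdef,
    Real.log_rpow h2π, Real.log_rpow hn0, hCdef,
    Real.log_prod (fun i _ => (hΓx i).ne'), hPdef,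
    Real.log_prod (fun p hp => (htermpos p hp).ne')]
  have hsump : (∑ p ∈ univ.filter (fun p : Fin d × Fin d => p.1 < p.2),
        Real.log (((n:ℝ) + y p.1 * Real.sqrt n) - ((n:ℝ) + y p.2 * Real.sqrt n)
          + ((p.2:ℕ):ℝ) - ((p.1:ℕ):ℝ)))
      = ((d:ℝ)*((d:ℝ)-1)/2) * (Real.log n / 2)
        + ∑ p ∈ univ.filter (fun p : Fin d × Fin d => p.1 < p.2),
            Real.log (y p.1 - y p.2 + (((p.2:ℕ):ℝ) - ((p.1:ℕ):ℝ))/Real.sqrt n) := by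
    rw [Finset.sum_congr rfl (fun p hp => by
      rw [hterm p hp, Real.log_mul hs0.ne' (hfacpos p hp).ne',
        Real.log_sqrt (Nat.cast_nonneg n)])]
    rw [Finset.sum_add_distrib, Finset.sum_const, nsmul_eq_mul, card_pairs]
  have hxsum : ∑ i, (xv d y n i - 1/2) = (d:ℝ)*(n:ℝ) + (d:ℝ)^2/2 := by
    have h1 : ∀ i : Fin d, xv d y n i - 1/2
        = (((n:ℝ) + (d:ℝ) - 1/2) + (y i * Real.sqrt n - ((i:ℕ):ℝ))) := fun i => by
      simp only [xv]; ring
    rw [Finset.sum_congr rfl fun i _ => h1 i, Finset.sum_add_distrib, Finset.sum_const,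
      card_univ, Fintype.card_fin, nsmul_eq_mul, Finset.sum_sub_distrib, ← Finset.sum_mul,
      hsum, zero_mul, zero_sub]
    rw [show (∑ i : Fin d, ((i:ℕ):ℝ)) = (d:ℝ)*((d:ℝ)-1)/2 by
      rw [Fin.sum_univ_eq_sum_range (fun k => (k:ℝ)) d]; exact sum_range_real d]
    ring
  have hper : ∀ i : Fin d, Real.log (Real.Gamma (xv d y n i))
      = Rst (xv d y n i)
        + ((xv d y n i - 1/2) * (Real.log (xv d y n i) - Real.log n)
            - (y i * Real.sqrt n + ((d:ℝ) - (i:ℕ))))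
        + (xv d y n i - 1/2) * Real.log n - (n:ℝ) := by
    intro i
    simp only [Rst, xv]
    ring
  have hsumΓ : ∑ i, Real.log (Real.Gamma (xv d y n i))
      = ∑ i, Rst (xv d y n i)
        + ∑ i, ((xv d y n i - 1/2) * (Real.log (xv d y n i) - Real.log n)
            - (y i * Real.sqrt n + ((d:ℝ) - (i:ℕ))))
        + ((d:ℝ)*(n:ℝ) + (d:ℝ)^2/2) * Real.log n - (d:ℝ)*(n:ℝ) := by
    rw [Finset.sum_congr rfl fun i _ => hper i]
    rw [Finset.sum_sub_distrib, Finset.sum_add_distrib, Finset.sum_add_distrib,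
      ← Finset.sum_mul, hxsum, Finset.sum_const, card_univ, Fintype.card_fin, nsmul_eq_mul]
  rw [hsump, hsumΓ, Phi]
  push_cast
  ring

open Real Filter in
theorem stmt13 (d : ℕ) (hd : 2 ≤ d) (y : Fin d → ℝ) (hy : ∀ i j : Fin d, i < j → y j < y i)
    (hsum : ∑ i, y i = 0) :
    Tendsto (fun n : ℕ =>
      ((2 * π) ^ ((d : ℝ) / 2) * (n : ℝ) ^ ((d * n : ℕ) + (d : ℝ) * (d + 1) / 4 : ℝ) /
          (Real.Gamma (d * n + 1) * Real.exp (d * n))) *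
        dimR d (fun i => (n : ℝ) + y i * Real.sqrt n))
      atTop (nhds (Real.exp (- W d y))) := by
  have hEq := F_eq d y hy hsum
  have hPhi := (Real.continuous_exp.tendsto _).comp (phi_tendsto d y hy)
  exact hPhi.congr' (hEq.mono fun n h => h.symm)
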